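/- An ultrafilter 𝒰 on ω is a P-point if and only if Player I does not have a winning strategy in the P-point game on 𝒰. -/

import Mathlib

lemma PPG.pos_finite (m : ℕ) :
    {l : List (Finset ℕ) | l.length ≤ m ∧ ∀ s ∈ l, s ⊆ Finset.range m}.Finite := by
  have h1 : {l : List ((Finset.range m).powerset : Finset (Finset ℕ)) | l.length ≤ m}.Finite :=
    List.finite_length_le _ m
  apply (h1.image (List.map Subtype.val)).subset
  rintro l ⟨hl, hs⟩
  refine ⟨l.pmap (fun s h => ⟨s, h⟩) (fun s hsl => Finset.mem_powerset.mpr (hs s hsl)), ?_, ?_⟩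
  · simpa using hl
  · simp [List.map_pmap]


lemma PPG.mem_foldr {l : List (Finset ℕ)} {t : Finset ℕ} (ht : t ∈ l) {a : ℕ} (ha : a ∈ t) :
    a ∈ l.foldr (· ∪ ·) ∅ := by
  induction l with
  | nil => simp at ht
  | cons b l ih =>
    rcases List.mem_cons.mp ht with rfl | h
    · simp [ha]
    · simp [ih h]

lemma PPG.strategy (U : Ultrafilter ℕ) (f : ℕ → ℕ)
    (hf : ∀ A ∈ U, ¬((∀ n : ℕ, (A ∩ f ⁻¹' {n}).Finite) ∨ ∃ c, ∀ x ∈ A, f x = c)) :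
    ∃ σ : List (Finset ℕ) → Set ℕ,
      (∀ l : List (Finset ℕ), σ l ∈ U) ∧
      ∀ s : ℕ → Finset ℕ,
        (∀ n : ℕ, ↑(s n) ⊆ σ (List.ofFn fun k : Fin n => s k)) →
        (⋃ n, ↑(s n) : Set ℕ) ∉ U := by
  classical
  have hfib : ∀ c, f ⁻¹' {c} ∉ U := by
    intro c hc
    exact hf _ hc (Or.inr ⟨c, fun x hx => hx⟩)
  set T : List (Finset ℕ) → Finset ℕ := fun l => (l.foldr (· ∪ ·) ∅).image f with hT
  set σ : List (Finset ℕ) → Set ℕ := fun l => {y | f y ∉ T l} with hσ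
  have hσU : ∀ l, σ l ∈ U := by
    intro l
    have heq : σ l = (f ⁻¹' (↑(T l) : Set ℕ))ᶜ := by
      ext y; simp [hσ]
    rw [heq, Ultrafilter.compl_mem_iff_notMem]
    intro hmem
    have hcup : f ⁻¹' (↑(T l) : Set ℕ) = ⋃ c ∈ (↑(T l) : Set ℕ), f ⁻¹' {c} := by
      ext y; simp
    rw [hcup] at hmem
    obtain ⟨c, _, hcU⟩ := (Ultrafilter.finite_biUnion_mem_iff (T l).finite_toSet).mp hmem
    exact hfib c hcU
  refine ⟨σ, hσU, fun s hs hSU => ?_⟩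
  apply hf _ hSU
  left
  intro c
  by_cases hx : ∃ n, ∃ x ∈ s n, f x = c
  · obtain ⟨n, x, hxn, hfx⟩ := hx
    have hsub : (⋃ m, ↑(s m) : Set ℕ) ∩ f ⁻¹' {c} ⊆ ⋃ m ∈ Finset.range (n+1), (↑(s m) : Set ℕ) := by
      rintro y ⟨hyS, hyc⟩
      obtain ⟨m, hym⟩ := Set.mem_iUnion.mp hyS
      rcases le_or_gt m n with hmn | hnm
      · exact Set.mem_biUnion (Finset.mem_range.mpr (by omega)) hym
      · exfalso
        have hyσ := hs m hym
        rw [hσ] at hyσ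
        have hxin : s n ∈ (List.ofFn fun k : Fin m => s k) :=
          List.mem_ofFn.mpr ⟨⟨n, hnm⟩, rfl⟩
        have hcT : c ∈ T (List.ofFn fun k : Fin m => s k) :=
          Finset.mem_image.mpr ⟨x, PPG.mem_foldr hxin hxn, hfx⟩
        exact hyσ (by rw [show f y = c from hyc]; exact hcT)
    exact (((Finset.range (n+1)).finite_toSet.biUnion fun m _ => (s m).finite_toSet).subset hsub)
  · have : (⋃ m, ↑(s m) : Set ℕ) ∩ f ⁻¹' {c} = ∅ := by
      ext y
      simp only [Set.mem_inter_iff, Set.mem_iUnion, Set.mem_preimage, Set.mem_singleton_iff,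
        Set.mem_empty_iff_false, iff_false, not_and]
      rintro ⟨m, hym⟩ hyc
      exact hx ⟨m, y, hym, hyc⟩
    rw [this]; exact Set.finite_empty

lemma PPG.pseudo (U : Ultrafilter ℕ)
    (hP : ∀ f : ℕ → ℕ, ∃ A ∈ U,
      (∀ n : ℕ, (A ∩ f ⁻¹' {n}).Finite) ∨ ∃ c, ∀ x ∈ A, f x = c)
    (A : ℕ → Set ℕ) (hA : ∀ n, A n ∈ U) :
    ∃ B ∈ U, ∀ n, (B \ A n).Finite := by
  set A' : ℕ → Set ℕ := fun k => ⋂ j ∈ Set.Iic k, A j with hA'def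
  have hA'mem : ∀ k, A' k ∈ U := fun k =>
    (Filter.biInter_mem (Set.finite_Iic k)).mpr fun j _ => hA j
  have hA'sub : ∀ k, A' k ⊆ A k := fun k => Set.biInter_subset_of_mem (le_refl k)
  classical
  set f : ℕ → ℕ := fun x => if h : ∃ k, x ∉ A' k then Nat.find h else 0 with hfdef
  obtain ⟨C, hC, hcase⟩ := hP f
  rcases hcase with hfin | ⟨c, hc⟩
  · refine ⟨C, hC, fun n => ?_⟩
    have hsub : C \ A n ⊆ ⋃ j ∈ Set.Iic n, (C ∩ f ⁻¹' {j}) := by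
      rintro x ⟨hxC, hxA⟩
      have hex : ∃ k, x ∉ A' k := ⟨n, fun hx => hxA (hA'sub n hx)⟩
      have hfx : f x = Nat.find hex := by simp [hfdef, dif_pos hex]
      have hle : Nat.find hex ≤ n := Nat.find_le (fun hx => hxA (hA'sub n hx))
      exact Set.mem_biUnion (show f x ∈ Set.Iic n by rw [hfx]; exact hle) ⟨hxC, rfl⟩
    exact ((Set.finite_Iic n).biUnion fun j _ => hfin j).subset hsub
  · refine ⟨C ∩ A' c, Filter.inter_mem hC (hA'mem c), fun n => ?_⟩
    have : (C ∩ A' c) \ A n = ∅ := by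
      ext x
      simp only [Set.mem_diff, Set.mem_inter_iff, Set.mem_empty_iff_false, iff_false, not_and]
      rintro ⟨hxC, hxc⟩ hxA
      have hex : ∃ k, x ∉ A' k := ⟨n, fun hx => hxA (hA'sub n hx)⟩
      have hfx : f x = Nat.find hex := by simp [hfdef, dif_pos hex]
      have : Nat.find hex = c := by rw [← hfx]; exact hc x hxC
      exact (this ▸ Nat.find_spec hex) hxc
    rw [this]; exact Set.finite_empty
lemma PPG.no_win (U : Ultrafilter ℕ) (hU : (U : Filter ℕ) ≤ Filter.cofinite)
    (hpseudo : ∀ A : ℕ → Set ℕ, (∀ n, A n ∈ U) → ∃ B ∈ U, ∀ n, (B \ A n).Finite)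
    (σ : List (Finset ℕ) → Set ℕ) (hσU : ∀ l, σ l ∈ U) :
    ∃ s : ℕ → Finset ℕ,
      (∀ n : ℕ, ↑(s n) ⊆ σ (List.ofFn fun k : Fin n => s k)) ∧
      (⋃ n, ↑(s n) : Set ℕ) ∈ U := by
  classical
  set Pos : ℕ → Set (List (Finset ℕ)) :=
    fun m => {l | l.length ≤ m ∧ ∀ s ∈ l, s ⊆ Finset.range m} with hPos
  set A : ℕ → Set ℕ := fun m => ⋂ p ∈ Pos m, σ p with hAdef
  have hA : ∀ m, A m ∈ U := fun m =>
    (Filter.biInter_mem (PPG.pos_finite m)).mpr fun p _ => hσU p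
  obtain ⟨B, hB, hBfin⟩ := hpseudo A hA
  set φ : ℕ → ℕ := fun m => sSup (B \ A m) + 1 with hφdef
  have hφ : ∀ m, ∀ x ∈ B, φ m ≤ x → x ∈ A m := by
    intro m x hx hge
    by_contra hxA
    have h1 : x ≤ sSup (B \ A m) := le_csSup (hBfin m).bddAbove ⟨hx, hxA⟩
    have h2 : sSup (B \ A m) + 1 ≤ x := hge
    omega
  set u : ℕ → ℕ := fun i => Nat.rec 0 (fun _ ui => max (ui + 1) (φ ui)) i with hudef
  have hu_succ : ∀ i, u (i + 1) = max (u i + 1) (φ (u i)) := fun i => rfl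
  have hu_mono : StrictMono u := strictMono_nat_of_lt_succ fun i => by
    rw [hu_succ]; omega
  have hu_ge : ∀ i, i ≤ u i := fun i => hu_mono.le_apply
  have htail : ∀ i, ∀ x ∈ B, u (i + 1) ≤ x → x ∈ A (u i) := by
    intro i x hx hge
    refine hφ _ x hx ?_
    have := hu_succ i
    omega
  -- the two candidate plays
  have sfin : ∀ o k : ℕ, (B ∩ Set.Ico (u (2*k+o+1)) (u (2*k+o+2))).Finite :=
    fun o k => (Set.finite_Ico _ _).subset Set.inter_subset_right
  set s : ℕ → ℕ → Finset ℕ := fun o k => (sfin o k).toFinset with hsdef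
  have hmem : ∀ o k x, x ∈ s o k ↔ x ∈ B ∧ u (2*k+o+1) ≤ x ∧ x < u (2*k+o+2) := by
    intro o k x
    rw [hsdef, Set.Finite.mem_toFinset]
    exact Iff.rfl
  have hmoves : ∀ o, 1 ≤ o → ∀ k : ℕ,
      ↑(s o k) ⊆ σ (List.ofFn fun j : Fin k => s o j) := by
    intro o ho k x hx
    rw [Finset.mem_coe, hmem] at hx
    have hpos : (List.ofFn fun j : Fin k => s o j) ∈ Pos (u (2*k+o)) := by
      constructor
      · rw [List.length_ofFn]
        calc k ≤ 2*k+o := by omega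
        _ ≤ u (2*k+o) := hu_ge _
      · intro t ht y hy
        rw [List.mem_ofFn] at ht
        obtain ⟨j, rfl⟩ := ht
        rw [hmem] at hy
        rw [Finset.mem_range]
        have hlt : y < u (2*(j:ℕ)+o+2) := hy.2.2
        have hjk : 2*(j:ℕ)+o+2 ≤ 2*k+o := by have := j.2; omega
        have : u (2*(j:ℕ)+o+2) ≤ u (2*k+o) := hu_mono.le_iff_le.mpr hjk
        omega
    have hxA : x ∈ A (u (2*k+o)) := by
      apply htail (2*k+o) x hx.1
      have : 2*k+o+1 = (2*k+o)+1 := by omega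
      rw [this] at hx
      exact hx.2.1
    rw [hAdef] at hxA
    exact Set.biInter_subset_of_mem hpos hxA
  -- coverage
  have hcover : B ∩ {x | u 2 ≤ x} ⊆ (⋃ n, ↑(s 1 n)) ∪ (⋃ n, ↑(s 2 n)) := by
    rintro x ⟨hxB, hx2⟩
    have hex : ∃ j, x < u j := ⟨x + 1, lt_of_lt_of_le (Nat.lt_succ_self x) (hu_ge (x+1))⟩
    set j := Nat.find hex with hjdef
    have hj : x < u j := Nat.find_spec hex
    have hx2' : u 2 ≤ x := hx2
    have hj3 : 3 ≤ j := by
      by_contra h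
      have h' : j ≤ 2 := by omega
      have hle : u j ≤ u 2 := hu_mono.le_iff_le.mpr h'
      omega
    have hjx : u (j - 1) ≤ x := by
      have := Nat.find_min hex (show j - 1 < j by omega)
      omega
    rcases Nat.even_or_odd (j - 1) with ⟨m, hm⟩ | ⟨m, hm⟩
    · -- j - 1 = 2m, m ≥ 1 : o = 1 block with k = m - 1 : [u (2k+2), u (2k+3))
      left
      refine Set.mem_iUnion.mpr ⟨m - 1, Finset.mem_coe.mpr ((hmem 1 (m-1) x).mpr ?_)⟩
      have h1 : 2*(m-1)+1+1 = j - 1 := by omega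
      have h2 : 2*(m-1)+1+2 = j := by omega
      rw [h1, h2]
      exact ⟨hxB, hjx, hj⟩
    · -- j - 1 = 2m + 1 : o = 2 block with k = m - 1 : [u (2k+3), u (2k+4))
      right
      refine Set.mem_iUnion.mpr ⟨m - 1, Finset.mem_coe.mpr ((hmem 2 (m-1) x).mpr ?_)⟩
      have h1 : 2*(m-1)+2+1 = j - 1 := by omega
      have h2 : 2*(m-1)+2+2 = j := by omega
      rw [h1, h2]
      exact ⟨hxB, hjx, hj⟩
  have htailU : B ∩ {x | u 2 ≤ x} ∈ U := by
    refine Filter.inter_mem hB (hU ?_)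
    rw [Filter.mem_cofinite]
    apply (Set.finite_Iio (u 2)).subset
    intro x hx
    simp only [Set.mem_compl_iff, Set.mem_setOf_eq, not_le] at hx
    exact hx
  have hun : (⋃ n, ↑(s 1 n)) ∪ (⋃ n, ↑(s 2 n)) ∈ U :=
    Filter.mem_of_superset htailU hcover
  rcases (Ultrafilter.union_mem_iff).mp hun with h | h
  · exact ⟨s 1, hmoves 1 le_rfl, h⟩
  · exact ⟨s 2, hmoves 2 (by omega), h⟩

/-- A non-principal ultrafilter `U` on `ω` is a P-point iff Player I has no
winning strategy in the P-point game on `U`. A strategy for Player I is a map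
`σ` from finite sequences of Player II's moves (finite sets) to sets in `U`;
it is winning if for every play `s : ℕ → Finset ℕ` with `s n ⊆ σ ⟨s 0, …, s (n-1)⟩`
for all `n`, the union `⋃ n, s n` is not in `U`. -/
theorem pPoint_iff_no_winning_strategy (U : Ultrafilter ℕ)
    (hU : (U : Filter ℕ) ≤ Filter.cofinite) :
    (∀ f : ℕ → ℕ, ∃ A ∈ U,
      (∀ n : ℕ, (A ∩ f ⁻¹' {n}).Finite) ∨ ∃ c, ∀ x ∈ A, f x = c) ↔
    ¬∃ σ : List (Finset ℕ) → Set ℕ,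
      (∀ l : List (Finset ℕ), σ l ∈ U) ∧
      ∀ s : ℕ → Finset ℕ,
        (∀ n : ℕ, ↑(s n) ⊆ σ (List.ofFn fun k : Fin n => s k)) →
        (⋃ n, ↑(s n) : Set ℕ) ∉ U := by
  constructor
  · intro hP
    rintro ⟨σ, hσU, hwin⟩
    obtain ⟨s, hs, hSU⟩ := PPG.no_win U hU (PPG.pseudo U hP) σ hσU
    exact hwin s hs hSU
  · intro hno f
    by_contra h0
    have hf : ∀ A ∈ U, ¬((∀ n : ℕ, (A ∩ f ⁻¹' {n}).Finite) ∨ ∃ c, ∀ x ∈ A, f x = c) :=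
      fun A hA hPA => h0 ⟨A, hA, hPA⟩
    exact hno (PPG.strategy U f hf)
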